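/- arXiv:1811.12253 — 4 statements merged into one kernel-verified Lean document; each statement's English description precedes it below -/
import Mathlib

section
/- For every round t, the weight ratio satisfies (∑_{i} w_{t+1}(i)) / (∑_{i} w_t(i)) ≤ 1 + ((γ/K)/(1−γ))·∑_{i} p_t(i)·x_t(i) + ((e−2)·(γ/K)²/(1−γ))·∑_{i} p_t(i)·(x_t(i))², where e = exp(1). -/
open Finset in
lemma exp_quad_bound {z : ℝ} (h0 : 0 ≤ z) (h1 : z ≤ 1) :
    Real.exp z ≤ 1 + z + (Real.exp 1 - 2) * z ^ 2 := by
  have hsum : ∀ y : ℝ, Summable (fun n : ℕ => y ^ n / n.factorial) :=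
    fun y => Real.summable_pow_div_factorial y
  have hexp : ∀ y : ℝ, Real.exp y = ∑' n : ℕ, y ^ n / n.factorial := by
    intro y
    rw [Real.exp_eq_exp_ℝ, NormedSpace.exp_eq_tsum_div]
  have hsplit : ∀ y : ℝ, Real.exp y
      = (1 + y) + ∑' n : ℕ, y ^ (n + 2) / (n + 2).factorial := by
    intro y
    rw [hexp y, ← Summable.sum_add_tsum_nat_add 2 (hsum y)]
    norm_num [Finset.sum_range_succ]
  have htailsum : ∀ y : ℝ, Summable (fun n : ℕ => y ^ (n + 2) / (n + 2).factorial) :=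
    fun y => (summable_nat_add_iff 2).2 (hsum y)
  have htail : (∑' n : ℕ, z ^ (n + 2) / (n + 2).factorial)
      ≤ z ^ 2 * ∑' n : ℕ, (1:ℝ) ^ (n + 2) / (n + 2).factorial := by
    rw [← tsum_mul_left]
    refine Summable.tsum_le_tsum ?_ (htailsum z) (Summable.mul_left _ (htailsum 1))
    intro n
    have : z ^ (n + 2) ≤ z ^ 2 := by
      calc z ^ (n + 2) = z ^ n * z ^ 2 := by ring
        _ ≤ 1 * z ^ 2 := by gcongr; exact pow_le_one₀ h0 h1
        _ = z ^ 2 := one_mul _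
    calc z ^ (n + 2) / (n + 2).factorial ≤ z ^ 2 / (n + 2).factorial := by gcongr
      _ = z ^ 2 * (1 ^ (n + 2) / (n + 2).factorial) := by rw [one_pow]; ring
  have h1tail : (∑' n : ℕ, (1:ℝ) ^ (n + 2) / (n + 2).factorial) = Real.exp 1 - 2 := by
    have := hsplit 1
    linarith
  have := hsplit z
  rw [this]
  nlinarith [htail, h1tail]

open Finset in
theorem exp3_bwk_weight_ratio
    (K : ℕ) (hK : 1 ≤ K) (γ : ℝ) (hγ0 : 0 < γ) (hγ1 : γ < 1)
    (x : ℕ → Fin K → ℝ)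
    (hx0 : ∀ t i, 0 ≤ x t i)
    (hx1 : ∀ t i, (γ / K) * x t i ≤ 1)
    (w : ℕ → Fin K → ℝ)
    (hw0 : ∀ i, w 0 i = 1)
    (hwrec : ∀ t i, w (t + 1) i = w t i * Real.exp ((γ / K) * x t i))
    (p : ℕ → Fin K → ℝ)
    (hp : ∀ t i, p t i = (1 - γ) * w t i / (∑ j, w t j) + γ / K)
    (t : ℕ) :
    (∑ i, w (t + 1) i) / (∑ i, w t i) ≤
      1 + ((γ / K) / (1 - γ)) * ∑ i, p t i * x t i
        + ((Real.exp 1 - 2) * (γ / K) ^ 2 / (1 - γ)) * ∑ i, p t i * (x t i) ^ 2 := by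
  have hK0 : (0:ℝ) < K := by exact_mod_cast hK
  have hγK : 0 < γ / K := div_pos hγ0 hK0
  have hwpos : ∀ s i, 0 < w s i := by
    intro s
    induction s with
    | zero => intro i; rw [hw0]; norm_num
    | succ n ih => intro i; rw [hwrec]; exact mul_pos (ih i) (Real.exp_pos _)
  have hne : (univ : Finset (Fin K)).Nonempty := by
    have : Nonempty (Fin K) := Fin.pos_iff_nonempty.mp hK
    exact univ_nonempty
  have hW : 0 < ∑ i, w t i := Finset.sum_pos (fun i _ => hwpos t i) hne
  have h1γ : 0 < 1 - γ := by linarith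
  -- key pointwise fact: w t i / W ≤ p t i / (1 - γ)
  have hpw : ∀ i, w t i / (∑ j, w t j) ≤ p t i / (1 - γ) := by
    intro i
    rw [hp t i, le_div_iff₀ h1γ]
    have hq : (1 - γ) * w t i / (∑ j, w t j) = w t i / (∑ j, w t j) * (1 - γ) := by
      ring
    linarith [hγK]
  have he2 : (0:ℝ) ≤ Real.exp 1 - 2 := by
    nlinarith [Real.add_one_le_exp (1:ℝ)]
  set W := ∑ j, w t j with hWdef
  have step1 : (∑ i, w (t + 1) i) ≤
      ∑ i, w t i * (1 + (γ / K) * x t i + (Real.exp 1 - 2) * ((γ / K) * x t i) ^ 2) := by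
    refine Finset.sum_le_sum (fun i _ => ?_)
    rw [hwrec]
    refine mul_le_mul_of_nonneg_left ?_ (le_of_lt (hwpos t i))
    exact exp_quad_bound (mul_nonneg (le_of_lt hγK) (hx0 t i)) (hx1 t i)
  have step2 : (∑ i, w (t + 1) i) / W ≤
      1 + ∑ i, (w t i / W) * ((γ / K) * x t i)
        + (Real.exp 1 - 2) * ∑ i, (w t i / W) * ((γ / K) * x t i) ^ 2 := by
    have h2 : (∑ i, w (t + 1) i) / W
        ≤ (∑ i, w t i * (1 + (γ / K) * x t i
            + (Real.exp 1 - 2) * ((γ / K) * x t i) ^ 2)) / W := by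
      gcongr
    refine h2.trans (le_of_eq ?_)
    rw [Finset.sum_div]
    rw [Finset.sum_congr rfl (fun i _ => by field_simp :
      ∀ i ∈ univ, w t i * (1 + (γ / K) * x t i
          + (Real.exp 1 - 2) * ((γ / K) * x t i) ^ 2) / W
        = w t i / W + (w t i / W) * ((γ / K) * x t i)
          + (Real.exp 1 - 2) * ((w t i / W) * ((γ / K) * x t i) ^ 2))]
    rw [Finset.sum_add_distrib, Finset.sum_add_distrib, ← Finset.sum_div,
      div_self hW.ne', ← Finset.mul_sum]
  have step3a : ∑ i, (w t i / W) * ((γ / K) * x t i)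
      ≤ ∑ i, (p t i / (1 - γ)) * ((γ / K) * x t i) := by
    refine Finset.sum_le_sum (fun i _ => ?_)
    exact mul_le_mul_of_nonneg_right (hpw i) (mul_nonneg (le_of_lt hγK) (hx0 t i))
  have step3b : ∑ i, (w t i / W) * ((γ / K) * x t i) ^ 2
      ≤ ∑ i, (p t i / (1 - γ)) * ((γ / K) * x t i) ^ 2 := by
    refine Finset.sum_le_sum (fun i _ => ?_)
    exact mul_le_mul_of_nonneg_right (hpw i) (sq_nonneg _)
  have eq4a : ∑ i, (p t i / (1 - γ)) * ((γ / K) * x t i)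
      = ((γ / K) / (1 - γ)) * ∑ i, p t i * x t i := by
    rw [Finset.mul_sum]
    exact Finset.sum_congr rfl (fun i _ => by ring)
  have eq4b : (Real.exp 1 - 2) * ∑ i, (p t i / (1 - γ)) * ((γ / K) * x t i) ^ 2
      = ((Real.exp 1 - 2) * (γ / K) ^ 2 / (1 - γ)) * ∑ i, p t i * (x t i) ^ 2 := by
    rw [Finset.mul_sum, Finset.mul_sum]
    exact Finset.sum_congr rfl (fun i _ => by ring)
  calc (∑ i, w (t + 1) i) / W
      ≤ 1 + ∑ i, (w t i / W) * ((γ / K) * x t i)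
        + (Real.exp 1 - 2) * ∑ i, (w t i / W) * ((γ / K) * x t i) ^ 2 := step2
    _ ≤ 1 + ∑ i, (p t i / (1 - γ)) * ((γ / K) * x t i)
        + (Real.exp 1 - 2) * ∑ i, (p t i / (1 - γ)) * ((γ / K) * x t i) ^ 2 := by
        gcongr
    _ = _ := by rw [eq4a, eq4b]
end

section
/- For every action j ∈ Fin K and every horizon T, the EXP3.BwK weight recursion satisfies (c_min·γ/K)·∑_{t=0}^{T−1} ê_t(j) − log K ≤ ((c_min·γ/K)/(1−γ))·∑_{t=0}^{T−1} r_t/c_t + ((e−2)·c_min·(γ/K)²/(1−γ))·∑_{t=0}^{T−1} ∑_{i} ê_t(i), where e = exp(1). (The condition γ·c_min·ê_t(i)/K ≤ 1 needed for the analysis holds automatically because p_t(i) ≥ γ/K.) -/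
open Nat in
lemma exp_quad_bound_aux (x : ℝ) (h0 : 0 ≤ x) (h1 : x ≤ 1) :
    Real.exp x ≤ 1 + x + (Real.exp 1 - 2) * x ^ 2 := by
  have hs : ∀ y : ℝ, Summable (fun n : ℕ => y ^ n / n !) := Real.summable_pow_div_factorial
  have hexp : ∀ y : ℝ, Real.exp y = ∑' n : ℕ, y ^ n / n ! := by
    intro y
    rw [Real.exp_eq_exp_ℝ, NormedSpace.exp_eq_tsum_div]
  have hsplit : ∀ y : ℝ, Real.exp y
      = (∑ n ∈ Finset.range 2, y ^ n / n !) + ∑' n : ℕ, y ^ (n + 2) / (n + 2)! := by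
    intro y
    rw [hexp y, ← Summable.sum_add_tsum_nat_add 2 (hs y)]
  have h2 : ∀ y : ℝ, (∑ n ∈ Finset.range 2, y ^ n / n !) = 1 + y := by
    intro y; simp [Finset.sum_range_succ]
  have htail : (∑' n : ℕ, x ^ (n + 2) / (n + 2)!) ≤ x ^ 2 * ∑' n : ℕ, (1:ℝ) ^ (n + 2) / (n + 2)! := by
    rw [← tsum_mul_left]
    apply Summable.tsum_le_tsum _ ((hs x).comp_injective (add_left_injective 2))
      (((hs 1).comp_injective (add_left_injective 2)).mul_left _)
    intro n
    simp only [Function.comp_apply, one_pow, mul_one_div]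
    apply div_le_div_of_nonneg_right _ (by positivity)
    calc x ^ (n + 2) = x ^ n * x ^ 2 := by ring
      _ ≤ 1 * x ^ 2 := by
          apply mul_le_mul_of_nonneg_right _ (by positivity)
          exact pow_le_one₀ h0 h1
      _ = x ^ 2 := one_mul _
  have he : (∑' n : ℕ, (1:ℝ) ^ (n + 2) / (n + 2)!) = Real.exp 1 - 2 := by
    have := hsplit 1
    rw [h2 1] at this
    linarith
  rw [hsplit x, h2 x]
  rw [he] at htail
  linarith [htail]

open Finset in
theorem exp3_bwk_main_recursion_bound
    (K : ℕ) (hK : 1 ≤ K) (γ : ℝ) (hγ0 : 0 < γ) (hγ1 : γ < 1)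
    (cmin : ℝ) (hc0 : 0 < cmin) (hc1 : cmin ≤ 1)
    (it : ℕ → Fin K) (r c : ℕ → ℝ)
    (hr : ∀ t, 0 ≤ r t ∧ r t ≤ 1)
    (hc : ∀ t, cmin ≤ c t ∧ c t ≤ 1)
    (w : ℕ → Fin K → ℝ) (p : ℕ → Fin K → ℝ) (ehat : ℕ → Fin K → ℝ)
    (hw0 : ∀ i, w 0 i = 1)
    (hp : ∀ t i, p t i = (1 - γ) * w t i / (∑ j, w t j) + γ / K)
    (hehat : ∀ t i, ehat t i = if i = it t then r t / (p t i * c t) else 0)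
    (hwrec : ∀ t i, w (t + 1) i = w t i * Real.exp (γ * cmin * ehat t i / K))
    (j : Fin K) (T : ℕ) :
    (cmin * γ / K) * (∑ t ∈ range T, ehat t j) - Real.log K ≤
      ((cmin * γ / K) / (1 - γ)) * ∑ t ∈ range T, r t / c t
        + ((Real.exp 1 - 2) * cmin * (γ / K) ^ 2 / (1 - γ)) *
            ∑ t ∈ range T, ∑ i, ehat t i := by
  have hKpos : (0:ℝ) < K := by exact_mod_cast Nat.lt_of_lt_of_le Nat.zero_lt_one hK
  have h1γ : (0:ℝ) < 1 - γ := by linarith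
  have hγK : (0:ℝ) < γ / K := div_pos hγ0 hKpos
  have he2 : (0:ℝ) ≤ Real.exp 1 - 2 := by
    have := Real.add_one_le_exp (1:ℝ); linarith
  have hcpos : ∀ t, 0 < c t := fun t => lt_of_lt_of_le hc0 (hc t).1
  -- positivity of the weights
  have hwpos : ∀ t i, 0 < w t i := by
    intro t
    induction t with
    | zero => intro i; rw [hw0]; norm_num
    | succ t ih => intro i; rw [hwrec]; exact mul_pos (ih i) (Real.exp_pos _)
  have hWpos : ∀ t, 0 < ∑ i, w t i :=
    fun t => Finset.sum_pos (fun i _ => hwpos t i) ⟨j, Finset.mem_univ j⟩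
  have hpge : ∀ t i, γ / K ≤ p t i := by
    intro t i
    rw [hp t i]
    have h1 : 0 ≤ (1 - γ) * w t i / (∑ k, w t k) := by
      apply div_nonneg (by nlinarith [hwpos t i]) (le_of_lt (hWpos t))
    linarith
  have hppos : ∀ t i, 0 < p t i := fun t i => lt_of_lt_of_le hγK (hpge t i)
  have hepos : ∀ t i, 0 ≤ ehat t i := by
    intro t i
    rw [hehat t i]
    split
    · exact div_nonneg (hr t).1 (le_of_lt (mul_pos (hppos t i) (hcpos t)))
    · exact le_rfl
  have hxle : ∀ t i, γ * cmin * ehat t i / K ≤ 1 := by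
    intro t i
    rw [hehat t i]
    split
    · have hd : γ / K * cmin ≤ p t i * c t := by
        apply mul_le_mul (hpge t i) (hc t).1 (le_of_lt hc0) (le_of_lt (hppos t i))
      have hd0 : 0 < γ / K * cmin := mul_pos hγK hc0
      have hub : r t / (p t i * c t) ≤ 1 / (γ / K * cmin) := by
        gcongr
        · exact (hr t).2
      rw [div_le_one hKpos]
      calc γ * cmin * (r t / (p t i * c t)) ≤ γ * cmin * (1 / (γ / K * cmin)) := by
            apply mul_le_mul_of_nonneg_left hub (by positivity)
        _ = K := by field_simp
    · simp
  -- per-round potential step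
  have key : ∀ t, Real.log (∑ i, w (t+1) i) ≤ Real.log (∑ i, w t i)
      + (((cmin * γ / K) / (1 - γ)) * (r t / c t)
        + ((Real.exp 1 - 2) * cmin * (γ / K) ^ 2 / (1 - γ)) * ∑ i, ehat t i) := by
    intro t
    set A : ℝ := ((cmin * γ / K) / (1 - γ)) * (r t / c t)
        + ((Real.exp 1 - 2) * cmin * (γ / K) ^ 2 / (1 - γ)) * ∑ i, ehat t i with hA
    have hA0 : 0 ≤ A := by
      apply add_nonneg
      · apply mul_nonneg (by positivity)
        exact div_nonneg (hr t).1 (hcpos t).le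
      · apply mul_nonneg
        · apply div_nonneg _ h1γ.le
          apply mul_nonneg (mul_nonneg he2 hc0.le) (by positivity)
        · exact Finset.sum_nonneg fun i _ => hepos t i
    have hw_le : ∀ i, w t i ≤ (∑ k, w t k) * p t i / (1 - γ) := by
      intro i
      have h1 : (1 - γ) * w t i / (∑ k, w t k) ≤ p t i := by
        rw [hp t i]; linarith [hγK]
      rw [div_le_iff₀ (hWpos t)] at h1
      rw [le_div_iff₀ h1γ]
      nlinarith
    have hz1 : ∀ i, 0 ≤ γ * cmin * ehat t i / K := fun i =>
      div_nonneg (mul_nonneg (mul_nonneg hγ0.le hc0.le) (hepos t i)) hKpos.le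
    have hz0 : ∀ i, 0 ≤ γ * cmin * ehat t i / K
        + (Real.exp 1 - 2) * (γ * cmin * ehat t i / K) ^ 2 := fun i =>
      add_nonneg (hz1 i) (mul_nonneg he2 (sq_nonneg _))
    have hpe : ∑ i, p t i * ehat t i = r t / c t := by
      have : ∀ i, p t i * ehat t i = if i = it t then r t / c t else 0 := by
        intro i
        rw [hehat t i]
        split
        · rw [← mul_div_assoc]; exact mul_div_mul_left _ _ (hppos t i).ne'
        · simp
      rw [Finset.sum_congr rfl fun i _ => this i, Finset.sum_ite_eq' Finset.univ (it t)]
      simp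
    have hpe2 : ∑ i, p t i * ehat t i ^ 2 ≤ (∑ i, ehat t i) / cmin := by
      have h1 : ∀ i, p t i * ehat t i ^ 2 = (p t i * ehat t i) * ehat t i := by
        intro i; ring
      have h2 : ∀ i, (p t i * ehat t i) * ehat t i ≤ (1 / cmin) * ehat t i := by
        intro i
        apply mul_le_mul_of_nonneg_right _ (hepos t i)
        rw [hehat t i]
        split
        · have e1 : p t i * (r t / (p t i * c t)) = r t / c t := by
            rw [← mul_div_assoc]; exact mul_div_mul_left _ _ (hppos t i).ne'
          rw [e1]
          exact div_le_div₀ (by norm_num) (hr t).2 hc0 (hc t).1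
        · simp
          positivity
      calc ∑ i, p t i * ehat t i ^ 2 = ∑ i, (p t i * ehat t i) * ehat t i :=
            Finset.sum_congr rfl fun i _ => h1 i
        _ ≤ ∑ i, (1 / cmin) * ehat t i := Finset.sum_le_sum fun i _ => h2 i
        _ = (∑ i, ehat t i) / cmin := by rw [← Finset.mul_sum]; ring
    have hmain : (∑ i, w (t+1) i) ≤ (∑ i, w t i) * (1 + A) := by
      calc ∑ i, w (t+1) i
          = ∑ i, w t i * Real.exp (γ * cmin * ehat t i / K) :=
            Finset.sum_congr rfl fun i _ => hwrec t i
        _ ≤ ∑ i, w t i * (1 + γ * cmin * ehat t i / K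
              + (Real.exp 1 - 2) * (γ * cmin * ehat t i / K) ^ 2) := by
            apply Finset.sum_le_sum
            intro i _
            apply mul_le_mul_of_nonneg_left _ (hwpos t i).le
            exact exp_quad_bound_aux _ (hz1 i) (hxle t i)
        _ = (∑ i, w t i) + ∑ i, w t i * (γ * cmin * ehat t i / K
              + (Real.exp 1 - 2) * (γ * cmin * ehat t i / K) ^ 2) := by
            rw [← Finset.sum_add_distrib]
            exact Finset.sum_congr rfl fun i _ => by ring
        _ ≤ (∑ i, w t i) + ∑ i, ((∑ k, w t k) * p t i / (1 - γ)) * (γ * cmin * ehat t i / K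
              + (Real.exp 1 - 2) * (γ * cmin * ehat t i / K) ^ 2) := by
            apply add_le_add_right
            apply Finset.sum_le_sum
            intro i _
            exact mul_le_mul_of_nonneg_right (hw_le i) (hz0 i)
        _ = (∑ i, w t i) + ((∑ k, w t k) / (1 - γ))
              * ((γ * cmin / K) * (∑ i, p t i * ehat t i)
                + (Real.exp 1 - 2) * (γ * cmin / K) ^ 2 * (∑ i, p t i * ehat t i ^ 2)) := by
            congr 1
            rw [Finset.mul_sum, Finset.mul_sum, mul_add, Finset.mul_sum, Finset.mul_sum,
              ← Finset.sum_add_distrib]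
            exact Finset.sum_congr rfl fun i _ => by ring
        _ ≤ (∑ i, w t i) + ((∑ k, w t k) / (1 - γ))
              * ((γ * cmin / K) * (r t / c t)
                + (Real.exp 1 - 2) * (γ * cmin / K) ^ 2 * ((∑ i, ehat t i) / cmin)) := by
            apply add_le_add_right
            apply mul_le_mul_of_nonneg_left _ (div_nonneg (hWpos t).le h1γ.le)
            apply add_le_add
            · exact le_of_eq (by rw [hpe])
            · exact mul_le_mul_of_nonneg_left hpe2 (mul_nonneg he2 (by positivity))
        _ = (∑ i, w t i) * (1 + A) := by
            have hc' : c t ≠ 0 := (hcpos t).ne'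
            have hK' : (K:ℝ) ≠ 0 := hKpos.ne'
            have hcm' : cmin ≠ 0 := hc0.ne'
            have h1γ' : (1 - γ) ≠ 0 := h1γ.ne'
            rw [hA]
            field_simp
    have hW1 : 0 < ∑ i, w (t+1) i := hWpos (t+1)
    calc Real.log (∑ i, w (t+1) i) ≤ Real.log ((∑ i, w t i) * (1 + A)) :=
          Real.log_le_log hW1 hmain
      _ = Real.log (∑ i, w t i) + Real.log (1 + A) := by
          rw [Real.log_mul (hWpos t).ne' (by linarith)]
      _ ≤ Real.log (∑ i, w t i) + A := by
          have := Real.log_le_sub_one_of_pos (show (0:ℝ) < 1 + A by linarith)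
          linarith
  -- telescoping
  have hlog : ∀ S : ℕ, Real.log (∑ i, w S i) ≤ Real.log K
      + ∑ t ∈ range S, (((cmin * γ / K) / (1 - γ)) * (r t / c t)
        + ((Real.exp 1 - 2) * cmin * (γ / K) ^ 2 / (1 - γ)) * ∑ i, ehat t i) := by
    intro S
    induction S with
    | zero =>
        simp [hw0]
    | succ S ih =>
        rw [Finset.sum_range_succ]
        calc Real.log (∑ i, w (S+1) i) ≤ Real.log (∑ i, w S i) + _ := key S
          _ ≤ _ := by linarith
  -- lower bound via w T j
  have hwT : ∀ S : ℕ, w S j = Real.exp (∑ t ∈ range S, γ * cmin * ehat t j / K) := by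
    intro S
    induction S with
    | zero => simp [hw0]
    | succ S ih => rw [hwrec, ih, ← Real.exp_add, Finset.sum_range_succ]
  have hlb : (cmin * γ / K) * (∑ t ∈ range T, ehat t j) ≤ Real.log (∑ i, w T i) := by
    have h1 : Real.log (w T j) ≤ Real.log (∑ i, w T i) := by
      apply Real.log_le_log (hwpos T j)
      exact Finset.single_le_sum (fun i _ => (hwpos T i).le) (Finset.mem_univ j)
    rw [hwT T, Real.log_exp] at h1
    calc (cmin * γ / K) * (∑ t ∈ range T, ehat t j)
        = ∑ t ∈ range T, γ * cmin * ehat t j / K := by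
          rw [Finset.mul_sum]; exact Finset.sum_congr rfl fun t _ => by ring
      _ ≤ _ := h1
  have hsum : ∑ t ∈ range T, (((cmin * γ / K) / (1 - γ)) * (r t / c t)
        + ((Real.exp 1 - 2) * cmin * (γ / K) ^ 2 / (1 - γ)) * ∑ i, ehat t i)
      = ((cmin * γ / K) / (1 - γ)) * ∑ t ∈ range T, r t / c t
        + ((Real.exp 1 - 2) * cmin * (γ / K) ^ 2 / (1 - γ)) * ∑ t ∈ range T, ∑ i, ehat t i := by
    rw [Finset.sum_add_distrib, Finset.mul_sum, Finset.mul_sum]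
  have := hlog T
  rw [hsum] at this
  linarith [hlb]
end

section
/- Let λ, η, μ, ρ, r̄, c̄ be real numbers with 0 ≤ η < λ, 0 ≤ μ ≤ 1, ρ ≥ λ, c̄ ≥ λ − η, μ − r̄ ≤ η, and c̄ − ρ ≤ η. Then μ/ρ − r̄/c̄ ≤ (1 + 1/λ)·η/(λ − η). -/
theorem ucb_ratio_comparison
    (lam eta mu rho rbar cbar : ℝ)
    (heta0 : 0 ≤ eta) (hetalam : eta < lam)
    (hmu0 : 0 ≤ mu) (hmu1 : mu ≤ 1)
    (hrho : lam ≤ rho)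
    (hcbar : lam - eta ≤ cbar)
    (hrdev : mu - rbar ≤ eta)
    (hcdev : cbar - rho ≤ eta) :
    mu / rho - rbar / cbar ≤ (1 + 1 / lam) * eta / (lam - eta) := by
  have hlam : 0 < lam := lt_of_le_of_lt heta0 hetalam
  have hle : 0 < lam - eta := by linarith
  have hcb : 0 < cbar := lt_of_lt_of_le hle hcbar
  have hrho0 : 0 < rho := lt_of_lt_of_le hlam hrho
  -- step 1: rbar ≥ mu - eta
  have step1 : mu / rho - rbar / cbar ≤ mu / rho - (mu - eta) / cbar := by
    gcongr
    linarith
  have step2 : mu / rho - (mu - eta) / cbar ≤ (eta + eta * rho) / (rho * cbar) := by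
    rw [div_sub_div _ _ (ne_of_gt hrho0) (ne_of_gt hcb), div_le_div_iff₀ (by positivity) (by positivity)]
    have h : mu * (cbar - rho) ≤ eta := le_trans (mul_le_mul_of_nonneg_left hcdev hmu0) (by nlinarith)
    nlinarith [mul_pos hrho0 hcb]
  have step3 : (eta + eta * rho) / (rho * cbar) ≤ (1 + 1 / lam) * eta / (lam - eta) := by
    rw [div_le_div_iff₀ (by positivity) hle]
    have h1 : eta * (lam - eta) ≤ eta * cbar := by
      apply mul_le_mul_of_nonneg_left hcbar heta0
    have h2 : lam ≤ rho := hrho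
    have : (eta + eta * rho) * (lam - eta) ≤ eta * cbar + eta * rho * cbar := by nlinarith
    have hrhs : (1 + 1 / lam) * eta * (rho * cbar) = eta * rho * cbar + eta * rho * cbar / lam := by
      field_simp
    rw [hrhs]
    have : eta * cbar ≤ eta * rho * cbar / lam := by
      rw [le_div_iff₀ hlam]
      nlinarith [mul_nonneg (mul_nonneg heta0 hcb.le) (sub_nonneg.mpr hrho)]
    linarith
  linarith
end

section
/- Let λ, η, μ, ρ, r̄, c̄ be real numbers with 0 ≤ η < λ, 0 ≤ μ ≤ 1, ρ ≥ λ, c̄ ≥ λ − η, r̄ − μ ≤ η, and ρ − c̄ ≤ η. Then r̄/c̄ − μ/ρ ≤ (1 + 1/λ)·η/(λ − η). -/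
theorem lcb_ratio_comparison
    (lam eta mu rho rbar cbar : ℝ)
    (heta0 : 0 ≤ eta) (hetalam : eta < lam)
    (hmu0 : 0 ≤ mu) (hmu1 : mu ≤ 1)
    (hrho : lam ≤ rho)
    (hcbar : lam - eta ≤ cbar)
    (hrdev : rbar - mu ≤ eta)
    (hcdev : rho - cbar ≤ eta) :
    rbar / cbar - mu / rho ≤ (1 + 1 / lam) * eta / (lam - eta) := by
  have hlam : 0 < lam := lt_of_le_of_lt heta0 hetalam
  have hle : 0 < lam - eta := by linarith
  have hc : 0 < cbar := lt_of_lt_of_le hle hcbar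
  have hr : 0 < rho := lt_of_lt_of_le hlam hrho
  have hrw : (1 + 1 / lam) * eta / (lam - eta) = ((lam + 1) * eta) / (lam * (lam - eta)) := by
    field_simp
  rw [hrw, div_sub_div _ _ hc.ne' hr.ne', div_le_div_iff₀ (by positivity) (by positivity)]
  have key : rbar * rho - cbar * mu ≤ eta * (1 + rho) := by
    nlinarith [mul_nonneg hr.le (by linarith : (0:ℝ) ≤ mu + eta - rbar),
      mul_nonneg hmu0 (by linarith : (0:ℝ) ≤ eta - rho + cbar),
      mul_nonneg (by linarith : (0:ℝ) ≤ 1 - mu) heta0]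
  have key2 := mul_le_mul_of_nonneg_right key (mul_pos hlam hle).le
  have h1 : 0 ≤ eta * (lam - eta) * (rho - lam) :=
    mul_nonneg (mul_nonneg heta0 hle.le) (by linarith)
  have h2 : 0 ≤ eta * (1 + lam) * rho * (cbar - (lam - eta)) :=
    mul_nonneg (mul_nonneg (mul_nonneg heta0 (by linarith)) hr.le) (by linarith)
  nlinarith [key2, h1, h2]
end
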